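/- Let (M,d) be a metric space, Γ ⊂ M×M a c_p-cyclically monotone set, and s,t ∈ [0,1]. Define Γ_{s,t} := {(γ_s, γ_t) : γ ∈ Geo(M), (γ₀, γ₁) ∈ Γ}, the set of pairs of intermediate points along geodesics whose endpoints lie in Γ. Then Γ_{s,t} is c_p-cyclically monotone. -/

import Mathlib

open Set

/-- A set `Γ ⊂ X × X` is `c_p`-cyclically monotone for the cost `c_p(x,y) = d(x,y)^p`. -/
def CpCyclicallyMonotone (p : ℝ) {X : Type*} [PseudoMetricSpace X] (Γ : Set (X × X)) : Prop :=
  ∀ (n : ℕ) (f : Fin n → X × X), (∀ i, f i ∈ Γ) → ∀ σ : Equiv.Perm (Fin n),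
    (∑ i, dist (f i).1 (f i).2 ^ p) ≤ ∑ i, dist (f i).1 (f (σ i)).2 ^ p

/-- A constant-speed geodesic parametrized on `[0,1]`. -/
def IsGeodesicOn {X : Type*} [PseudoMetricSpace X] (γ : ℝ → X) : Prop :=
  ∀ s ∈ Icc (0:ℝ) 1, ∀ t ∈ Icc (0:ℝ) 1, dist (γ s) (γ t) = |s - t| * dist (γ 0) (γ 1)

lemma cp_aux (p : ℝ) (hp : 1 < p) {n : ℕ} (ℓ d : Fin n → ℝ) (σ : Equiv.Perm (Fin n))
    (hℓ : ∀ i, 0 ≤ ℓ i) (hd : ∀ i, 0 ≤ d i) (a b e : ℝ)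
    (ha : 0 ≤ a) (hb : 0 ≤ b) (he : 0 ≤ e) (habe : a + b + e = 1)
    (key : ∑ i, ℓ i ^ p ≤ ∑ i, (a * ℓ i + d i + b * ℓ (σ i)) ^ p) :
    ∑ i, (e * ℓ i) ^ p ≤ ∑ i, d i ^ p := by
  have hp0 : 0 < p := lt_trans one_pos hp
  have hS : 0 ≤ ∑ i, ℓ i ^ p :=
    Finset.sum_nonneg fun i _ => Real.rpow_nonneg (hℓ i) p
  have hD : 0 ≤ ∑ i, d i ^ p :=
    Finset.sum_nonneg fun i _ => Real.rpow_nonneg (hd i) p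
  set S : ℝ := ∑ i, ℓ i ^ p with hSdef
  set D : ℝ := ∑ i, d i ^ p with hDdef
  have hperm : ∑ i, ℓ (σ i) ^ p = S := Equiv.sum_comp σ (fun i => ℓ i ^ p)
  -- Minkowski twice
  have M1 : (∑ i, ((a * ℓ i + d i) + b * ℓ (σ i)) ^ p) ^ (1/p) ≤
      (∑ i, (a * ℓ i + d i) ^ p) ^ (1/p) + (∑ i, (b * ℓ (σ i)) ^ p) ^ (1/p) :=
    Real.Lp_add_le_of_nonneg (s := Finset.univ) hp.le
      (fun i _ => add_nonneg (mul_nonneg ha (hℓ i)) (hd i))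
      (fun i _ => mul_nonneg hb (hℓ (σ i)))
  have M2 : (∑ i, (a * ℓ i + d i) ^ p) ^ (1/p) ≤
      (∑ i, (a * ℓ i) ^ p) ^ (1/p) + (∑ i, d i ^ p) ^ (1/p) :=
    Real.Lp_add_le_of_nonneg (s := Finset.univ) hp.le
      (fun i _ => mul_nonneg ha (hℓ i)) (fun i _ => hd i)
  have hmulsum : ∀ c : ℝ, 0 ≤ c → ∀ g : Fin n → ℝ, (∀ i, 0 ≤ g i) →
      ((∑ i, (c * g i) ^ p) : ℝ) ^ (1/p) = c * (∑ i, g i ^ p) ^ (1/p) := by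
    intro c hc g hg
    have : ∀ i, (c * g i) ^ p = c ^ p * g i ^ p := fun i => Real.mul_rpow hc (hg i)
    simp_rw [this, ← Finset.mul_sum]
    rw [Real.mul_rpow (Real.rpow_nonneg hc p)
      (Finset.sum_nonneg fun i _ => Real.rpow_nonneg (hg i) p),
      ← Real.rpow_mul hc, mul_one_div, div_self hp0.ne', Real.rpow_one]
  have e1 : ((∑ i, (a * ℓ i) ^ p) : ℝ) ^ (1/p) = a * S ^ (1/p) := by
    simpa using hmulsum a ha ℓ hℓ
  have e2 : ((∑ i, (b * ℓ (σ i)) ^ p) : ℝ) ^ (1/p) = b * S ^ (1/p) := by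
    have := hmulsum b hb (fun i => ℓ (σ i)) (fun i => hℓ (σ i))
    rw [this, hperm]
  have hmono : S ^ (1/p) ≤ (∑ i, (a * ℓ i + d i + b * ℓ (σ i)) ^ p) ^ (1/p) :=
    Real.rpow_le_rpow hS key (by positivity)
  have chain : S ^ (1/p) ≤ a * S ^ (1/p) + D ^ (1/p) + b * S ^ (1/p) := by
    calc S ^ (1/p) ≤ (∑ i, (a * ℓ i + d i + b * ℓ (σ i)) ^ p) ^ (1/p) := hmono
    _ ≤ (∑ i, (a * ℓ i + d i) ^ p) ^ (1/p) + (∑ i, (b * ℓ (σ i)) ^ p) ^ (1/p) := M1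
    _ ≤ (∑ i, (a * ℓ i) ^ p) ^ (1/p) + D ^ (1/p) + (∑ i, (b * ℓ (σ i)) ^ p) ^ (1/p) := by
        exact add_le_add_left M2 _
    _ = a * S ^ (1/p) + D ^ (1/p) + b * S ^ (1/p) := by rw [e1, e2]
  have hfin : e * S ^ (1/p) ≤ D ^ (1/p) := by nlinarith [Real.rpow_nonneg hS (1/p)]
  have : (e * S ^ (1/p)) ^ p ≤ (D ^ (1/p)) ^ p :=
    Real.rpow_le_rpow (mul_nonneg he (Real.rpow_nonneg hS _)) hfin hp0.le
  rw [Real.mul_rpow he (Real.rpow_nonneg hS _), ← Real.rpow_mul hS, ← Real.rpow_mul hD,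
    one_div_mul_cancel hp0.ne', Real.rpow_one, Real.rpow_one] at this
  calc ∑ i, (e * ℓ i) ^ p = e ^ p * S := by
        have h : ∀ i, (e * ℓ i) ^ p = e ^ p * ℓ i ^ p := fun i => Real.mul_rpow he (hℓ i)
        simp_rw [h, ← Finset.mul_sum]
        rfl
  _ ≤ D := this

/-- If `Γ ⊂ M × M` is `c_p`-cyclically monotone and `s, t ∈ [0,1]`, then
the set `Γ_{s,t}` of pairs `(γ_s, γ_t)` of intermediate points along geodesics whose
endpoints lie in `Γ` is `c_p`-cyclically monotone. -/
theorem cpCyclicallyMonotone_intermediate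
    {M : Type*} [MetricSpace M] (p : ℝ) (hp : 1 < p)
    (Γ : Set (M × M)) (hΓ : CpCyclicallyMonotone p Γ)
    (s t : ℝ) (hs : s ∈ Icc (0:ℝ) 1) (ht : t ∈ Icc (0:ℝ) 1) :
    CpCyclicallyMonotone p
      {z : M × M | ∃ γ : ℝ → M, IsGeodesicOn γ ∧ (γ 0, γ 1) ∈ Γ ∧ z = (γ s, γ t)} := by
  intro n f hf σ
  choose γ hgeo hmem heq using hf
  have hp0 : 0 < p := lt_trans one_pos hp
  have h0 : (0:ℝ) ∈ Icc (0:ℝ) 1 := ⟨le_refl 0, zero_le_one⟩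
  have h1 : (1:ℝ) ∈ Icc (0:ℝ) 1 := ⟨zero_le_one, le_refl 1⟩
  set ℓ : Fin n → ℝ := fun i => dist (γ i 0) (γ i 1) with hℓdef
  set d : Fin n → ℝ := fun i => dist (γ i s) (γ (σ i) t) with hddef
  have hℓ : ∀ i, 0 ≤ ℓ i := fun i => dist_nonneg
  have hd : ∀ i, 0 ≤ d i := fun i => dist_nonneg
  have hxy : ∀ i, dist (f i).1 (f i).2 = |s - t| * ℓ i := by
    intro i; rw [heq i]; exact hgeo i s hs t ht
  have hxyσ : ∀ i, dist (f i).1 (f (σ i)).2 = d i := by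
    intro i; rw [heq i, heq (σ i)]
  simp_rw [hxy, hxyσ]
  -- geodesic length identities
  have g0s : ∀ i, dist (γ i 0) (γ i s) = s * ℓ i := by
    intro i
    rw [hgeo i 0 h0 s hs, zero_sub, abs_neg, abs_of_nonneg hs.1]
  have gt1 : ∀ i, dist (γ i t) (γ i 1) = (1 - t) * ℓ i := by
    intro i
    rw [hgeo i t ht 1 h1, abs_of_nonpos (by linarith [ht.2]), neg_sub]
  have g0t : ∀ i, dist (γ i 0) (γ i t) = t * ℓ i := by
    intro i
    rw [hgeo i 0 h0 t ht, zero_sub, abs_neg, abs_of_nonneg ht.1]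
  have gs1 : ∀ i, dist (γ i s) (γ i 1) = (1 - s) * ℓ i := by
    intro i
    rw [hgeo i s hs 1 h1, abs_of_nonpos (by linarith [hs.2]), neg_sub]
  rcases le_total s t with hst | hst
  · have habs : |s - t| = t - s := by
      rw [abs_sub_comm, abs_of_nonneg (sub_nonneg.2 hst)]
    rw [habs]
    refine cp_aux p hp ℓ d σ hℓ hd s (1 - t) (t - s) hs.1 (by linarith [ht.2])
      (by linarith) (by ring) ?_
    have base := hΓ n (fun i => (γ i 0, γ i 1)) (fun i => hmem i) σ
    refine base.trans (Finset.sum_le_sum fun i _ => ?_)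
    refine Real.rpow_le_rpow dist_nonneg ?_ hp0.le
    calc dist (γ i 0) (γ (σ i) 1)
        ≤ dist (γ i 0) (γ i s) + dist (γ i s) (γ (σ i) t) + dist (γ (σ i) t) (γ (σ i) 1) :=
          dist_triangle4 _ _ _ _
      _ = s * ℓ i + d i + (1 - t) * ℓ (σ i) := by rw [g0s, gt1]
  · have habs : |s - t| = s - t := abs_of_nonneg (sub_nonneg.2 hst)
    rw [habs]
    refine cp_aux p hp ℓ d σ hℓ hd (1 - s) t (s - t) (by linarith [hs.2]) ht.1
      (by linarith) (by ring) ?_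
    have base := hΓ n (fun i => (γ i 0, γ i 1)) (fun i => hmem i) σ⁻¹
    have reidx : ∑ i, dist (γ i 0) (γ (σ⁻¹ i) 1) ^ p
        = ∑ i, dist (γ (σ i) 0) (γ i 1) ^ p := by
      rw [← Equiv.sum_comp σ (fun j => dist (γ j 0) (γ (σ⁻¹ j) 1) ^ p)]
      simp
    rw [reidx] at base
    refine base.trans (Finset.sum_le_sum fun i _ => ?_)
    refine Real.rpow_le_rpow dist_nonneg ?_ hp0.le
    calc dist (γ (σ i) 0) (γ i 1)
        ≤ dist (γ (σ i) 0) (γ (σ i) t) + dist (γ (σ i) t) (γ i s) + dist (γ i s) (γ i 1) :=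
          dist_triangle4 _ _ _ _
      _ = (1 - s) * ℓ i + d i + t * ℓ (σ i) := by
          rw [g0t, gs1, dist_comm (γ (σ i) t) (γ i s)]; ring
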